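/- Let L : ℝ^d → ℝ be differentiable with L-Lipschitz gradient, let M ∈ ℝ^{d×d} be positive semi-definite with ‖M − I_d‖_F² ≤ 2(d+s), and for μ > 0 define L_μ(θ) = E_u[L(θ + μu)] and L_{μ,M}(θ) = E_u[L(θ + μMu)] where u ~ N(0,I_d). Then ‖∇L_{μ,M}(θ) − ∇L_μ(θ)‖ ≤ μL√(2(d+s)), and consequently ⟨∇L_μ(θ), ∇L_{μ,M}(θ)⟩ ≥ ‖∇L_μ(θ)‖² − μL√(2(d+s))·‖∇L_μ(θ)‖. -/

import Mathlib

open MeasureTheory ProbabilityTheory Matrix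

/-- The standard Gaussian measure `N(0, I_d)` on `ℝ^d`. -/
noncomputable def stdGaussianPi (d : ℕ) : Measure (Fin d → ℝ) :=
  Measure.pi fun _ => gaussianReal 0 1

/-- The standard Gaussian measure `N(0, I_d)` on Euclidean space. -/
noncomputable def stdGaussianE (d : ℕ) : Measure (EuclideanSpace ℝ (Fin d)) :=
  (stdGaussianPi d).map (MeasurableEquiv.toLp 2 (Fin d → ℝ))

/-- Matrix-vector multiplication on Euclidean space. -/
noncomputable def mulVecE {d : ℕ} (M : Matrix (Fin d) (Fin d) ℝ)
    (u : EuclideanSpace ℝ (Fin d)) : EuclideanSpace ℝ (Fin d) :=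
  (MeasurableEquiv.toLp 2 (Fin d → ℝ))
    (M.mulVec ((MeasurableEquiv.toLp 2 (Fin d → ℝ)).symm u))

/-- Frobenius norm of a real matrix. -/
noncomputable def frobNorm {m n : Type*} [Fintype m] [Fintype n]
    (A : Matrix m n ℝ) : ℝ :=
  Real.sqrt (∑ i, ∑ j, (A i j) ^ 2)


section AuxAlignment

open Real Filter Set

lemma g_tendsto : Tendsto (fun x : ℝ => x * rexp (-(2⁻¹:ℝ) * x ^ 2)) atTop (nhds 0) := by
  have h := rpow_mul_exp_neg_mul_sq_isLittleO_exp_neg (b := (2⁻¹:ℝ)) (by norm_num) 1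
  have h2 : Tendsto (fun x : ℝ => rexp (-(1/2) * x)) atTop (nhds 0) := by
    apply Real.tendsto_exp_atBot.comp
    apply Tendsto.const_mul_atTop_of_neg (by norm_num : (-(1/2):ℝ) < 0) tendsto_id
  have := h.tendsto_zero_of_tendsto h2
  refine this.congr' ?_
  filter_upwards [eventually_ge_atTop (0:ℝ)] with x hx
  rw [Real.rpow_one]

lemma integral_Ioi_sq_exp :
    ∫ x in Ioi (0:ℝ), x ^ 2 * rexp (-(2⁻¹:ℝ) * x ^ 2) = Real.sqrt (2 * π) / 2 := by
  have hderiv : ∀ x ∈ Ici (0:ℝ), HasDerivAt (fun x : ℝ => x * rexp (-(2⁻¹:ℝ) * x ^ 2))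
      (rexp (-(2⁻¹:ℝ) * x ^ 2) - x ^ 2 * rexp (-(2⁻¹:ℝ) * x ^ 2)) x := by
    intro x _
    have h1 : HasDerivAt (fun x : ℝ => -(2⁻¹:ℝ) * x ^ 2) (-(2⁻¹:ℝ) * (2 * x)) x := by
      simpa using ((hasDerivAt_pow 2 x).const_mul (-(2⁻¹:ℝ)))
    have := (hasDerivAt_id x).mul h1.exp
    refine HasDerivAt.congr_deriv this ?_
    simp only [id]
    ring
  have hint_exp : IntegrableOn (fun x : ℝ => rexp (-(2⁻¹:ℝ) * x ^ 2)) (Ioi 0) :=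
    (integrable_exp_neg_mul_sq (by norm_num : (0:ℝ) < 2⁻¹)).integrableOn
  have hint_sq : IntegrableOn (fun x : ℝ => x ^ 2 * rexp (-(2⁻¹:ℝ) * x ^ 2)) (Ioi 0) := by
    have := integrable_rpow_mul_exp_neg_mul_sq (by norm_num : (0:ℝ) < 2⁻¹)
      (by norm_num : (-1:ℝ) < 2)
    have h2 : (fun x : ℝ => x ^ (2:ℝ) * rexp (-(2⁻¹:ℝ) * x ^ 2))
        = fun x : ℝ => x ^ 2 * rexp (-(2⁻¹:ℝ) * x ^ 2) := by
      funext x; rw [show (2:ℝ) = ((2:ℕ):ℝ) by norm_num, Real.rpow_natCast]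
    rw [h2] at this
    exact this.integrableOn
  have key := integral_Ioi_of_hasDerivAt_of_tendsto' hderiv (hint_exp.sub hint_sq) g_tendsto
  have h3 : ∫ x in Ioi (0:ℝ), (rexp (-(2⁻¹:ℝ) * x ^ 2) - x ^ 2 * rexp (-(2⁻¹:ℝ) * x ^ 2)) =
      (∫ x in Ioi (0:ℝ), rexp (-(2⁻¹:ℝ) * x ^ 2)) -
        ∫ x in Ioi (0:ℝ), x ^ 2 * rexp (-(2⁻¹:ℝ) * x ^ 2) :=
    integral_sub hint_exp hint_sq
  rw [h3] at key
  have h4 : ∫ x in Ioi (0:ℝ), rexp (-(2⁻¹:ℝ) * x ^ 2) = Real.sqrt (π / 2⁻¹) / 2 :=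
    integral_gaussian_Ioi 2⁻¹
  have h5 : Real.sqrt (π / 2⁻¹) = Real.sqrt (2 * π) := by norm_num [mul_comm]
  simp only [mul_zero, zero_mul, Real.exp_zero, mul_one] at key
  rw [h4, h5] at key
  linarith [key]

lemma integral_sq_exp : ∫ x : ℝ, x ^ 2 * rexp (-(2⁻¹:ℝ) * x ^ 2) = Real.sqrt (2 * π) := by
  have h : (fun x : ℝ => x ^ 2 * rexp (-(2⁻¹:ℝ) * x ^ 2))
      = fun x : ℝ => |x| ^ 2 * rexp (-(2⁻¹:ℝ) * |x| ^ 2) := by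
    funext x; rw [sq_abs]
  rw [h, integral_comp_abs (f := fun x => x ^ 2 * rexp (-(2⁻¹:ℝ) * x ^ 2)),
    integral_Ioi_sq_exp]
  ring

section GaussMoments

lemma gaussianReal_eq : gaussianReal 0 1 = MeasureTheory.volume.withDensity
    (fun x => ((gaussianPDFReal 0 1 x).toNNReal : ENNReal)) := by
  rw [gaussianReal_of_var_ne_zero _ one_ne_zero]; rfl

lemma pdf01 (x : ℝ) : gaussianPDFReal 0 1 x = (Real.sqrt (2 * π))⁻¹ * rexp (-(2⁻¹:ℝ) * x ^ 2) := by
  simp only [gaussianPDFReal, NNReal.coe_one, mul_one, sub_zero]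
  rw [show -x ^ 2 / 2 = -(2⁻¹:ℝ) * x ^ 2 by ring]

lemma integral_gr (g : ℝ → ℝ) : ∫ x, g x ∂(gaussianReal 0 1)
    = ∫ x, gaussianPDFReal 0 1 x * g x := by
  rw [gaussianReal_eq, integral_withDensity_eq_integral_smul
    ((measurable_gaussianPDFReal 0 1).real_toNNReal)]
  congr 1; funext x
  rw [NNReal.smul_def, Real.coe_toNNReal _ (gaussianPDFReal_nonneg 0 1 x), smul_eq_mul]

lemma integrable_gr_iff (g : ℝ → ℝ) : Integrable g (gaussianReal 0 1)
    ↔ Integrable (fun x => gaussianPDFReal 0 1 x * g x) := by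
  rw [gaussianReal_eq, integrable_withDensity_iff_integrable_smul
    ((measurable_gaussianPDFReal 0 1).real_toNNReal)]
  constructor <;> intro h <;> refine h.congr (Filter.Eventually.of_forall fun x => ?_) <;>
    dsimp only <;>
    rw [NNReal.smul_def, Real.coe_toNNReal _ (gaussianPDFReal_nonneg 0 1 x), smul_eq_mul]

lemma integrable_id_gr : Integrable (fun x => x) (gaussianReal 0 1) := by
  rw [integrable_gr_iff]
  have h : Integrable (fun x : ℝ => (Real.sqrt (2 * π))⁻¹ * (x * rexp (-(2⁻¹:ℝ) * x ^ 2))) :=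
    (integrable_mul_exp_neg_mul_sq (by norm_num : (0:ℝ) < 2⁻¹)).const_mul _
  refine h.congr (Filter.Eventually.of_forall fun x => ?_)
  dsimp only; rw [pdf01]; ring

lemma integrable_sq_gr : Integrable (fun x => x ^ 2) (gaussianReal 0 1) := by
  rw [integrable_gr_iff]
  have h0 := integrable_rpow_mul_exp_neg_mul_sq (by norm_num : (0:ℝ) < 2⁻¹)
    (by norm_num : (-1:ℝ) < 2)
  have h2 : (fun x : ℝ => x ^ (2:ℝ) * rexp (-(2⁻¹:ℝ) * x ^ 2))
      = fun x : ℝ => x ^ 2 * rexp (-(2⁻¹:ℝ) * x ^ 2) := by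
    funext x; rw [show (2:ℝ) = ((2:ℕ):ℝ) by norm_num, Real.rpow_natCast]
  rw [h2] at h0
  have h : Integrable (fun x : ℝ => (Real.sqrt (2 * π))⁻¹ * (x ^ 2 * rexp (-(2⁻¹:ℝ) * x ^ 2))) :=
    h0.const_mul _
  refine h.congr (Filter.Eventually.of_forall fun x => ?_)
  dsimp only; rw [pdf01]; ring

lemma moment1_gr : ∫ x, x ∂(gaussianReal 0 1) = 0 := by
  rw [integral_gr]
  have h := integral_neg_eq_self (fun x => gaussianPDFReal 0 1 x * x) (volume : Measure ℝ)
  have h2 : ∀ x : ℝ, gaussianPDFReal 0 1 (-x) * (-x) = -(gaussianPDFReal 0 1 x * x) := by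
    intro x; rw [pdf01, pdf01]; ring_nf
  simp only [h2] at h
  rw [integral_neg] at h
  linarith [h]

lemma moment2_gr : ∫ x, x ^ 2 ∂(gaussianReal 0 1) = 1 := by
  rw [integral_gr]
  have h2 : ∀ x : ℝ, gaussianPDFReal 0 1 x * x ^ 2
      = (Real.sqrt (2 * π))⁻¹ * (x ^ 2 * rexp (-(2⁻¹:ℝ) * x ^ 2)) := by
    intro x; rw [pdf01]; ring
  simp only [h2]
  rw [integral_const_mul, integral_sq_exp, inv_mul_cancel₀]
  positivity

end GaussMoments

lemma integral_pi_prod' {n : ℕ} (μ : Fin n → Measure ℝ) [∀ i, IsProbabilityMeasure (μ i)]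
    (f : Fin n → ℝ → ℝ) :
    ∫ u, ∏ i, f i (u i) ∂(Measure.pi μ) = ∏ i, ∫ x, f i x ∂(μ i) := by
  induction n with
  | zero => simp
  | succ n ih =>
      calc
        _ = ∫ x : ℝ × (Fin n → ℝ), f 0 x.1 * ∏ i : Fin n, f (Fin.succ i) (x.2 i)
            ∂((μ 0).prod (Measure.pi fun i => μ (Fin.succ i))) := by
          rw [← ((measurePreserving_piFinSuccAbove μ 0).symm).integral_comp']
          congr 1
          funext x
          simp [MeasurableEquiv.piFinSuccAbove_symm_apply, Fin.insertNthEquiv,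
            Fin.prod_univ_succ, Fin.insertNth_zero, Fin.zero_succAbove]
        _ = (∫ x, f 0 x ∂(μ 0)) * ∏ i : Fin n, ∫ x, f (Fin.succ i) x ∂(μ (Fin.succ i)) := by
          rw [← ih (fun i => μ (Fin.succ i)) (fun i => f (Fin.succ i)), ← integral_prod_mul]
        _ = ∏ i, ∫ x, f i x ∂(μ i) := by rw [Fin.prod_univ_succ]

lemma integrable_pi_prod' {n : ℕ} (μ : Fin n → Measure ℝ) [∀ i, IsProbabilityMeasure (μ i)]
    (f : Fin n → ℝ → ℝ) (hf : ∀ i, Integrable (f i) (μ i)) :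
    Integrable (fun u => ∏ i, f i (u i)) (Measure.pi μ) := by
  induction n with
  | zero => simp
  | succ n ih =>
      have key : Integrable (fun x : ℝ × (Fin n → ℝ) => f 0 x.1 *
          ∏ i : Fin n, f (Fin.succ i) (x.2 i))
          ((μ 0).prod (Measure.pi fun i => μ (Fin.succ i))) :=
        (hf 0).mul_prod (ih (fun i => μ (Fin.succ i)) (fun i => f (Fin.succ i))
          (fun i => hf (Fin.succ i)))
      have hmp := (measurePreserving_piFinSuccAbove μ 0)
      have h2 : Integrable ((fun x : ℝ × (Fin n → ℝ) => f 0 x.1 *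
          ∏ i : Fin n, f (Fin.succ i) (x.2 i)) ∘ (MeasurableEquiv.piFinSuccAbove (fun _ => ℝ) 0))
          (Measure.pi μ) :=
        (integrable_map_equiv (MeasurableEquiv.piFinSuccAbove (fun _ => ℝ) 0) _).mp
          (by rw [hmp.map_eq]; exact key)
      refine h2.congr (Filter.Eventually.of_forall fun u => ?_)
      simp [MeasurableEquiv.piFinSuccAbove, Fin.prod_univ_succ, Fin.zero_succAbove, Fin.tail]

section Coord

variable {d : ℕ}

noncomputable def cf (j k : Fin d) (i : Fin d) : ℝ → ℝ :=
  if i = j ∨ i = k then (if j = k then fun x => x ^ 2 else fun x => x) else fun _ => 1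

lemma cf_integrable (j k i : Fin d) : Integrable (cf j k i) (gaussianReal 0 1) := by
  unfold cf
  split_ifs with h1 h2
  · exact integrable_sq_gr
  · exact integrable_id_gr
  all_goals exact integrable_const 1

lemma cf_prod (j k : Fin d) (u : Fin d → ℝ) :
    ∏ i, cf j k i (u i) = u j * u k := by
  by_cases hjk : j = k
  · subst hjk
    rw [Finset.prod_eq_single_of_mem j (Finset.mem_univ j)]
    · simp [cf, sq]
    · intro i _ hij
      simp [cf, hij]
  · rw [← Finset.mul_prod_erase Finset.univ _ (Finset.mem_univ j),
      ← Finset.mul_prod_erase _ _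
        (Finset.mem_erase.mpr ⟨fun h => hjk h.symm, Finset.mem_univ k⟩)]
    have hj : cf j k j (u j) = u j := by simp [cf, hjk]
    have hk : cf j k k (u k) = u k := by simp [cf, hjk]
    rw [hj, hk, Finset.prod_eq_one, mul_one]
    intro i hi
    rw [Finset.mem_erase] at hi
    obtain ⟨hik, hi2⟩ := hi
    rw [Finset.mem_erase] at hi2
    simp [cf, hi2.1, hik]

lemma integrable_coord_mul (j k : Fin d) :
    Integrable (fun u => u j * u k) (stdGaussianPi d) := by
  have := integrable_pi_prod' (fun _ : Fin d => gaussianReal 0 1) (cf j k) (cf_integrable j k)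
  exact this.congr (Filter.Eventually.of_forall fun u => cf_prod j k u)

lemma integral_coord_mul (j k : Fin d) :
    ∫ u, u j * u k ∂(stdGaussianPi d) = if j = k then 1 else 0 := by
  have h : ∫ u, u j * u k ∂(stdGaussianPi d)
      = ∫ u, ∏ i, cf j k i (u i) ∂(stdGaussianPi d) := by
    congr 1; funext u; rw [cf_prod]
  rw [h]
  unfold stdGaussianPi
  rw [integral_pi_prod']
  by_cases hjk : j = k
  · subst hjk
    simp only [if_pos rfl]
    apply Finset.prod_eq_one
    intro i _
    by_cases hij : i = j
    · simp [cf, hij, moment2_gr]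
    · simp [cf, hij]
  · rw [if_neg hjk]
    apply Finset.prod_eq_zero (Finset.mem_univ j)
    simp [cf, hjk, moment1_gr]

end Coord

section MulVec

variable {d : ℕ} (A : Matrix (Fin d) (Fin d) ℝ)

lemma mulVec_sq_expand (u : Fin d → ℝ) (i : Fin d) :
    (A.mulVec u i) ^ 2 = ∑ j, ∑ k, (A i j * A i k) * (u j * u k) := by
  have : A.mulVec u i = ∑ j, A i j * u j := by
    simp [Matrix.mulVec, dotProduct]
  rw [this, sq, Finset.sum_mul_sum]
  congr 1; funext j; congr 1; funext k; ring

lemma integrable_mulVec_sq_pi :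
    Integrable (fun u : Fin d → ℝ => ∑ i, (A.mulVec u i) ^ 2) (stdGaussianPi d) := by
  apply integrable_finset_sum
  intro i _
  have : (fun u : Fin d → ℝ => (A.mulVec u i) ^ 2)
      = fun u => ∑ j, ∑ k, (A i j * A i k) * (u j * u k) := by
    funext u; exact mulVec_sq_expand A u i
  rw [this]
  apply integrable_finset_sum; intro j _
  apply integrable_finset_sum; intro k _
  exact (integrable_coord_mul j k).const_mul _

lemma integral_mulVec_sq_pi :
    ∫ u, ∑ i, (A.mulVec u i) ^ 2 ∂(stdGaussianPi d) = ∑ i, ∑ j, A i j ^ 2 := by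
  rw [integral_finset_sum]
  swap
  · intro i _
    have : (fun u : Fin d → ℝ => (A.mulVec u i) ^ 2)
        = fun u => ∑ j, ∑ k, (A i j * A i k) * (u j * u k) := by
      funext u; exact mulVec_sq_expand A u i
    rw [this]
    apply integrable_finset_sum; intro j _
    apply integrable_finset_sum; intro k _
    exact (integrable_coord_mul j k).const_mul _
  congr 1; funext i
  simp_rw [mulVec_sq_expand A _ i]
  rw [integral_finset_sum _ (fun j _ => integrable_finset_sum _
    (fun k _ => (integrable_coord_mul j k).const_mul _))]
  have : ∀ j : Fin d, ∫ u, ∑ k, (A i j * A i k) * (u j * u k) ∂(stdGaussianPi d)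
      = ∑ k, (A i j * A i k) * (if j = k then 1 else 0) := by
    intro j
    rw [integral_finset_sum _ (fun k _ => (integrable_coord_mul j k).const_mul _)]
    congr 1; funext k
    rw [integral_const_mul, integral_coord_mul]
  simp_rw [this]
  congr 1; funext j
  simp [Finset.sum_ite_eq, sq]
end MulVec

section Euclid

variable {d : ℕ} (A : Matrix (Fin d) (Fin d) ℝ)

instance (d : ℕ) : IsProbabilityMeasure (stdGaussianPi d) := by
  unfold stdGaussianPi; infer_instance

instance (d : ℕ) : IsProbabilityMeasure (stdGaussianE d) :=
  Measure.isProbabilityMeasure_map (MeasurableEquiv.measurable _).aemeasurable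

lemma frobNorm_nonneg {m n : Type*} [Fintype m] [Fintype n] (B : Matrix m n ℝ) :
    0 ≤ frobNorm B := Real.sqrt_nonneg _

lemma frobNorm_sq {m n : Type*} [Fintype m] [Fintype n] (B : Matrix m n ℝ) :
    frobNorm B ^ 2 = ∑ i, ∑ j, (B i j) ^ 2 := by
  rw [frobNorm, Real.sq_sqrt]
  exact Finset.sum_nonneg fun i _ => Finset.sum_nonneg fun j _ => sq_nonneg _

lemma continuous_mulVecE : Continuous (mulVecE A) := by
  have h : mulVecE A = fun u => Matrix.toEuclideanLin A u := rfl
  rw [h]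
  exact LinearMap.continuous_of_finiteDimensional _

lemma normSqE (x : EuclideanSpace ℝ (Fin d)) : ‖x‖ ^ 2 = ∑ i, (x i) ^ 2 := by
  rw [EuclideanSpace.norm_eq, Real.sq_sqrt]
  · congr 1; funext i; rw [Real.norm_eq_abs, sq_abs]
  · exact Finset.sum_nonneg fun i _ => sq_nonneg _

lemma mulVecE_symm_apply (u : Fin d → ℝ) :
    mulVecE A ((MeasurableEquiv.toLp 2 (Fin d → ℝ)) u)
      = (MeasurableEquiv.toLp 2 (Fin d → ℝ)) (A.mulVec u) := by
  simp [mulVecE, MeasurableEquiv.apply_symm_apply]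

lemma integrable_normSqE :
    Integrable (fun u => ‖mulVecE A u‖ ^ 2) (stdGaussianE d) := by
  unfold stdGaussianE
  rw [integrable_map_equiv]
  refine (integrable_mulVec_sq_pi A).congr (Filter.Eventually.of_forall fun u => ?_)
  simp only [Function.comp_apply, mulVecE_symm_apply]
  rw [normSqE]
  rfl

lemma integral_normSqE :
    ∫ u, ‖mulVecE A u‖ ^ 2 ∂(stdGaussianE d) = frobNorm A ^ 2 := by
  unfold stdGaussianE
  rw [MeasureTheory.integral_map_equiv, frobNorm_sq, ← integral_mulVec_sq_pi A]
  congr 1; funext u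
  simp only [mulVecE_symm_apply]
  rw [normSqE]
  rfl

lemma aesm_norm_mulVecE : AEStronglyMeasurable (fun u => ‖mulVecE A u‖) (stdGaussianE d) :=
  (continuous_norm.comp (continuous_mulVecE A)).aestronglyMeasurable

lemma memL2_norm_mulVecE : MemLp (fun u => ‖mulVecE A u‖) 2 (stdGaussianE d) := by
  rw [memLp_two_iff_integrable_sq (aesm_norm_mulVecE A)]
  exact integrable_normSqE A

lemma integrable_norm_mulVecE :
    Integrable (fun u => ‖mulVecE A u‖) (stdGaussianE d) := by
  rw [← memLp_one_iff_integrable]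
  exact (memL2_norm_mulVecE A).mono_exponent (by norm_num)

lemma integral_norm_mulVecE_le :
    ∫ u, ‖mulVecE A u‖ ∂(stdGaussianE d) ≤ frobNorm A := by
  have hvar := variance_nonneg (fun u => ‖mulVecE A u‖) (stdGaussianE d)
  rw [variance_eq_sub (memL2_norm_mulVecE A)] at hvar
  have h2 : ∫ u, ((fun u => ‖mulVecE A u‖) ^ 2) u ∂(stdGaussianE d) = frobNorm A ^ 2 := by
    simp only [Pi.pow_apply]
    exact integral_normSqE A
  rw [h2] at hvar
  have h3 : 0 ≤ ∫ u, ‖mulVecE A u‖ ∂(stdGaussianE d) :=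
    integral_nonneg fun u => norm_nonneg _
  nlinarith [frobNorm_nonneg A]

end Euclid

section Growth

variable {d : ℕ} {Lf : EuclideanSpace ℝ (Fin d) → ℝ}
  {g : EuclideanSpace ℝ (Fin d) → EuclideanSpace ℝ (Fin d)} {L : ℝ}

lemma grad_norm_le (hL : 0 ≤ L) (hLip : ∀ x y, ‖g x - g y‖ ≤ L * ‖x - y‖)
    (z x : EuclideanSpace ℝ (Fin d)) : ‖g x‖ ≤ ‖g 0‖ + L * ‖x‖ := by
  have := hLip x 0
  have h2 := norm_sub_norm_le (g x) (g 0)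
  simp only [sub_zero] at this
  linarith

lemma Lf_growth (hL : 0 ≤ L) (hgrad : ∀ x, HasGradientAt Lf (g x) x)
    (hLip : ∀ x y, ‖g x - g y‖ ≤ L * ‖x - y‖) (z : EuclideanSpace ℝ (Fin d)) :
    |Lf z| ≤ |Lf 0| + (‖g 0‖ + L * ‖z‖) * ‖z‖ := by
  have key : ‖Lf z - Lf 0‖ ≤ (‖g 0‖ + L * ‖z‖) * ‖z - 0‖ := by
    apply Convex.norm_image_sub_le_of_norm_hasFDerivWithin_le
      (f' := fun x => (InnerProductSpace.toDual ℝ _ (g x) : EuclideanSpace ℝ (Fin d) →L[ℝ] ℝ))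
      (s := Metric.closedBall (0 : EuclideanSpace ℝ (Fin d)) ‖z‖)
    · intro x _
      exact (hgrad x).hasFDerivAt.hasFDerivWithinAt
    · intro x hx
      rw [Metric.mem_closedBall, dist_zero_right] at hx
      have h1 : ‖(InnerProductSpace.toDual ℝ (EuclideanSpace ℝ (Fin d)) (g x) :
          EuclideanSpace ℝ (Fin d) →L[ℝ] ℝ)‖ = ‖g x‖ := by
        exact (InnerProductSpace.toDual ℝ _).norm_map (g x)
      rw [h1]
      have := grad_norm_le hL hLip z x
      have : ‖g x‖ ≤ ‖g 0‖ + L * ‖x‖ := grad_norm_le hL hLip z x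
      nlinarith [norm_nonneg x]
    · exact convex_closedBall _ _
    · exact Metric.mem_closedBall_self (norm_nonneg z)
    · rw [Metric.mem_closedBall, dist_zero_right]
  rw [sub_zero] at key
  rw [Real.norm_eq_abs] at key
  have := abs_sub_abs_le_abs_sub (Lf z) (Lf 0)
  linarith

lemma continuous_Lf (hgrad : ∀ x, HasGradientAt Lf (g x) x) : Continuous Lf := by
  have : Differentiable ℝ Lf := fun x => (hgrad x).hasFDerivAt.differentiableAt
  exact this.continuous

lemma integrable_Lf_comp (hL : 0 ≤ L) (hgrad : ∀ x, HasGradientAt Lf (g x) x)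
    (hLip : ∀ x y, ‖g x - g y‖ ≤ L * ‖x - y‖)
    (θ' : EuclideanSpace ℝ (Fin d)) (μs : ℝ) (A : Matrix (Fin d) (Fin d) ℝ) :
    Integrable (fun u => Lf (θ' + μs • mulVecE A u)) (stdGaussianE d) := by
  set X : EuclideanSpace ℝ (Fin d) → ℝ := fun u => ‖mulVecE A u‖ with hX
  have hXint : Integrable X (stdGaussianE d) := integrable_norm_mulVecE A
  have hX2int : Integrable (fun u => X u ^ 2) (stdGaussianE d) := integrable_normSqE A
  set t : ℝ := ‖θ'‖
  set m : ℝ := |μs|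
  have hBint : Integrable (fun u =>
      |Lf 0| + ‖g 0‖ * (t + m * X u) + L * (t + m * X u) ^ 2) (stdGaussianE d) := by
    have : (fun u => |Lf 0| + ‖g 0‖ * (t + m * X u) + L * (t + m * X u) ^ 2)
        = fun u => (|Lf 0| + ‖g 0‖ * t + L * t ^ 2)
          + ((‖g 0‖ * m + L * (2 * t * m)) * X u + (L * m ^ 2) * X u ^ 2) := by
      funext u; ring
    rw [this]
    exact (integrable_const _).add ((hXint.const_mul _).add (hX2int.const_mul _))
  apply Integrable.mono' hBint
  · exact ((continuous_Lf hgrad).comp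
      (continuous_const.add ((continuous_mulVecE A).const_smul μs))).aestronglyMeasurable
  · refine Filter.Eventually.of_forall fun u => ?_
    have h1 : ‖θ' + μs • mulVecE A u‖ ≤ t + m * X u := by
      calc ‖θ' + μs • mulVecE A u‖ ≤ ‖θ'‖ + ‖μs • mulVecE A u‖ := norm_add_le _ _
      _ = t + m * X u := by rw [norm_smul]; rfl
    have h2 := Lf_growth hL hgrad hLip (θ' + μs • mulVecE A u)
    have h3 : 0 ≤ t + m * X u := by positivity
    have h4 : (‖g 0‖ + L * ‖θ' + μs • mulVecE A u‖) * ‖θ' + μs • mulVecE A u‖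
        ≤ (‖g 0‖ + L * (t + m * X u)) * (t + m * X u) := by
      have h5 := norm_nonneg (θ' + μs • mulVecE A u)
      have hb2 : ‖θ' + μs • mulVecE A u‖ ^ 2 ≤ (t + m * X u) ^ 2 := by nlinarith
      nlinarith [mul_le_mul_of_nonneg_left h1 (norm_nonneg (g (0 : EuclideanSpace ℝ (Fin d)))),
        mul_le_mul_of_nonneg_left hb2 hL]
    rw [Real.norm_eq_abs]
    calc |Lf (θ' + μs • mulVecE A u)| ≤ |Lf 0| + (‖g 0‖ + L * ‖θ' + μs • mulVecE A u‖) *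
        ‖θ' + μs • mulVecE A u‖ := h2
    _ ≤ |Lf 0| + (‖g 0‖ + L * (t + m * X u)) * (t + m * X u) := by linarith
    _ = |Lf 0| + ‖g 0‖ * (t + m * X u) + L * (t + m * X u) ^ 2 := by ring

end Growth

end AuxAlignment

/-- Alignment of smoothed gradients: if `L` has `L`-Lipschitz gradient and
`‖M − I‖_F² ≤ 2(d+s)`, then the gradients of the Gaussian-smoothed losses
`L_μ(θ) = E[L(θ + μu)]` and `L_{μ,M}(θ) = E[L(θ + μMu)]` satisfy
`‖∇L_{μ,M}(θ) − ∇L_μ(θ)‖ ≤ μL√(2(d+s))`, hence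
`⟨∇L_μ(θ), ∇L_{μ,M}(θ)⟩ ≥ ‖∇L_μ(θ)‖² − μL√(2(d+s))·‖∇L_μ(θ)‖`. -/
theorem alignment_smoothed_gradients
    (d : ℕ) (s : ℝ)
    (Lf : EuclideanSpace ℝ (Fin d) → ℝ)
    (g : EuclideanSpace ℝ (Fin d) → EuclideanSpace ℝ (Fin d))
    (L : ℝ) (hL : 0 ≤ L)
    (hgrad : ∀ x, HasGradientAt Lf (g x) x)
    (hLip : ∀ x y, ‖g x - g y‖ ≤ L * ‖x - y‖)
    (M : Matrix (Fin d) (Fin d) ℝ) (hM : M.PosSemidef)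
    (hMF : frobNorm (M - 1) ^ 2 ≤ 2 * ((d : ℝ) + s))
    (μs : ℝ) (hμ : 0 < μs)
    (θ gθ gMθ : EuclideanSpace ℝ (Fin d))
    (hGμ : HasGradientAt (fun θ' => ∫ u, Lf (θ' + μs • u) ∂(stdGaussianE d)) gθ θ)
    (hGμM : HasGradientAt
      (fun θ' => ∫ u, Lf (θ' + μs • mulVecE M u) ∂(stdGaussianE d)) gMθ θ) :
    ‖gMθ - gθ‖ ≤ μs * L * Real.sqrt (2 * ((d : ℝ) + s)) ∧
    (inner ℝ gθ gMθ : ℝ)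
      ≥ ‖gθ‖ ^ 2 - μs * L * Real.sqrt (2 * ((d : ℝ) + s)) * ‖gθ‖ := by
  set K : ℝ := μs * L * Real.sqrt (2 * ((d : ℝ) + s)) with hK
  have hsqrt_nonneg : (0:ℝ) ≤ Real.sqrt (2 * ((d : ℝ) + s)) := Real.sqrt_nonneg _
  have hK0 : 0 ≤ K := by positivity
  -- Frobenius bound
  have hfrob : frobNorm (M - 1) ≤ Real.sqrt (2 * ((d : ℝ) + s)) := by
    have h2ds : (0:ℝ) ≤ 2 * ((d : ℝ) + s) := le_trans (sq_nonneg _) hMF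
    rw [Real.le_sqrt (frobNorm_nonneg _) h2ds]
    exact hMF
  -- mulVecE identities
  have hmv1 : ∀ u : EuclideanSpace ℝ (Fin d), mulVecE (1 : Matrix (Fin d) (Fin d) ℝ) u = u := by
    intro u
    simp [mulVecE, Matrix.one_mulVec]
  have hmvsub : ∀ u : EuclideanSpace ℝ (Fin d),
      mulVecE M u - u = mulVecE (M - 1) u := by
    intro u
    have : (M - 1).mulVec ((MeasurableEquiv.toLp 2 (Fin d → ℝ)).symm u)
        = M.mulVec ((MeasurableEquiv.toLp 2 (Fin d → ℝ)).symm u)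
          - (MeasurableEquiv.toLp 2 (Fin d → ℝ)).symm u := by
      rw [Matrix.sub_mulVec, Matrix.one_mulVec]
    simp only [mulVecE, this]
    rfl
  -- integrabilities
  have hIM : ∀ x : EuclideanSpace ℝ (Fin d),
      Integrable (fun u => Lf (x + μs • mulVecE M u)) (stdGaussianE d) :=
    fun x => integrable_Lf_comp hL hgrad hLip x μs M
  have hI1 : ∀ x : EuclideanSpace ℝ (Fin d),
      Integrable (fun u => Lf (x + μs • u)) (stdGaussianE d) := by
    intro x
    have := integrable_Lf_comp hL hgrad hLip x μs (1 : Matrix (Fin d) (Fin d) ℝ)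
    refine this.congr (Filter.Eventually.of_forall fun u => ?_)
    dsimp only
    rw [hmv1]
  -- pointwise Lipschitz estimate
  have hpt : ∀ (x y : EuclideanSpace ℝ (Fin d)) (u : EuclideanSpace ℝ (Fin d)),
      |(Lf (x + μs • mulVecE M u) - Lf (x + μs • u))
        - (Lf (y + μs • mulVecE M u) - Lf (y + μs • u))|
        ≤ (L * ‖x - y‖ * μs) * ‖mulVecE (M - 1) u‖ := by
    intro x y u
    set v : EuclideanSpace ℝ (Fin d) := μs • mulVecE M u - μs • u with hv
    set φ : ℝ → ℝ := fun t => Lf (x + μs • u + t • v) - Lf (y + μs • u + t • v) with hφ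
    have hψ : ∀ (c : EuclideanSpace ℝ (Fin d)) (t : ℝ),
        HasDerivAt (fun t : ℝ => c + μs • u + t • v) v t := by
      intro c t
      simpa using ((hasDerivAt_id t).smul_const v).const_add (c + μs • u)
    have hder : ∀ t : ℝ, HasDerivAt φ
        ((inner ℝ (g (x + μs • u + t • v)) v : ℝ) - (inner ℝ (g (y + μs • u + t • v)) v : ℝ)) t := by
      intro t
      have h1 := ((hgrad (x + μs • u + t • v)).hasFDerivAt.comp_hasDerivAt t (hψ x t))
      have h2 := ((hgrad (y + μs • u + t • v)).hasFDerivAt.comp_hasDerivAt t (hψ y t))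
      have h1' : HasDerivAt (fun t : ℝ => Lf (x + μs • u + t • v))
          ((inner ℝ (g (x + μs • u + t • v)) v : ℝ)) t := by
        exact h1
      have h2' : HasDerivAt (fun t : ℝ => Lf (y + μs • u + t • v))
          ((inner ℝ (g (y + μs • u + t • v)) v : ℝ)) t := by
        exact h2
      exact h1'.sub h2'
    have hbound : ∀ t : ℝ,
        ‖(inner ℝ (g (x + μs • u + t • v)) v : ℝ) - (inner ℝ (g (y + μs • u + t • v)) v : ℝ)‖
          ≤ L * ‖x - y‖ * ‖v‖ := by
      intro t
      rw [← inner_sub_left]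
      calc ‖(inner ℝ (g (x + μs • u + t • v) - g (y + μs • u + t • v)) v : ℝ)‖
          ≤ ‖g (x + μs • u + t • v) - g (y + μs • u + t • v)‖ * ‖v‖ := norm_inner_le_norm _ _
        _ ≤ (L * ‖(x + μs • u + t • v) - (y + μs • u + t • v)‖) * ‖v‖ :=
            mul_le_mul_of_nonneg_right (hLip _ _) (norm_nonneg v)
        _ = L * ‖x - y‖ * ‖v‖ := by
            congr 2
            abel
    have key : ‖φ 1 - φ 0‖ ≤ (L * ‖x - y‖ * ‖v‖) * ‖(1:ℝ) - 0‖ := by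
      apply Convex.norm_image_sub_le_of_norm_hasDerivWithin_le
        (f' := fun t => (inner ℝ (g (x + μs • u + t • v)) v : ℝ)
          - (inner ℝ (g (y + μs • u + t • v)) v : ℝ)) (s := Set.univ)
      · intro t _
        exact (hder t).hasDerivWithinAt
      · intro t _
        exact hbound t
      · exact convex_univ
      · trivial
      · trivial
    have hφ1 : φ 1 = Lf (x + μs • mulVecE M u) - Lf (y + μs • mulVecE M u) := by
      simp only [hφ, one_smul, hv]
      congr 2 <;> abel
    have hφ0 : φ 0 = Lf (x + μs • u) - Lf (y + μs • u) := by
      simp only [hφ, zero_smul, add_zero]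
    have hvnorm : ‖v‖ = μs * ‖mulVecE (M - 1) u‖ := by
      rw [hv, ← smul_sub, hmvsub, norm_smul, Real.norm_eq_abs, abs_of_pos hμ]
    rw [hφ1, hφ0] at key
    simp only [Real.norm_eq_abs] at key
    rw [hvnorm] at key
    calc |(Lf (x + μs • mulVecE M u) - Lf (x + μs • u))
        - (Lf (y + μs • mulVecE M u) - Lf (y + μs • u))|
        = |(Lf (x + μs • mulVecE M u) - Lf (y + μs • mulVecE M u))
          - (Lf (x + μs • u) - Lf (y + μs • u))| := by ring_nf
      _ ≤ (L * ‖x - y‖ * μs) * ‖mulVecE (M - 1) u‖ := by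
          have h10 : |(1:ℝ) - 0| = 1 := by norm_num
          rw [h10, mul_one] at key
          calc _ ≤ L * ‖x - y‖ * (μs * ‖mulVecE (M - 1) u‖) := key
            _ = (L * ‖x - y‖ * μs) * ‖mulVecE (M - 1) u‖ := by ring
  -- Lipschitz property of the difference function D
  set D : EuclideanSpace ℝ (Fin d) → ℝ := fun θ' =>
    (∫ u, Lf (θ' + μs • mulVecE M u) ∂(stdGaussianE d))
      - ∫ u, Lf (θ' + μs • u) ∂(stdGaussianE d) with hD
  have hDlip : ∀ x y : EuclideanSpace ℝ (Fin d), ‖D x - D y‖ ≤ K * ‖x - y‖ := by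
    intro x y
    have e2 : ∀ z : EuclideanSpace ℝ (Fin d),
        ∫ u, (Lf (z + μs • mulVecE M u) - Lf (z + μs • u)) ∂(stdGaussianE d)
          = (∫ u, Lf (z + μs • mulVecE M u) ∂(stdGaussianE d))
            - ∫ u, Lf (z + μs • u) ∂(stdGaussianE d) :=
      fun z => integral_sub (hIM z) (hI1 z)
    have hxint : Integrable (fun u => Lf (x + μs • mulVecE M u) - Lf (x + μs • u))
        (stdGaussianE d) := (hIM x).sub (hI1 x)
    have hyint : Integrable (fun u => Lf (y + μs • mulVecE M u) - Lf (y + μs • u))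
        (stdGaussianE d) := (hIM y).sub (hI1 y)
    have hsplit : D x - D y = ∫ u, ((Lf (x + μs • mulVecE M u) - Lf (x + μs • u))
        - (Lf (y + μs • mulVecE M u) - Lf (y + μs • u))) ∂(stdGaussianE d) := by
      rw [integral_sub hxint hyint, e2 x, e2 y]
    rw [hsplit]
    have hgint : Integrable (fun u => (L * ‖x - y‖ * μs) * ‖mulVecE (M - 1) u‖)
        (stdGaussianE d) := (integrable_norm_mulVecE (M - 1)).const_mul _
    calc ‖∫ u, ((Lf (x + μs • mulVecE M u) - Lf (x + μs • u))
        - (Lf (y + μs • mulVecE M u) - Lf (y + μs • u))) ∂(stdGaussianE d)‖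
        ≤ ∫ u, (L * ‖x - y‖ * μs) * ‖mulVecE (M - 1) u‖ ∂(stdGaussianE d) := by
          apply norm_integral_le_of_norm_le hgint
          exact Filter.Eventually.of_forall fun u => hpt x y u
      _ = (L * ‖x - y‖ * μs) * ∫ u, ‖mulVecE (M - 1) u‖ ∂(stdGaussianE d) := by
          rw [integral_const_mul]
      _ ≤ K * ‖x - y‖ := by
          have h1 : (0:ℝ) ≤ L * ‖x - y‖ * μs := by positivity
          have h2 := integral_norm_mulVecE_le (M - 1)
          have h3 : (0:ℝ) ≤ ∫ u, ‖mulVecE (M - 1) u‖ ∂(stdGaussianE d) :=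
            integral_nonneg fun u => norm_nonneg _
          have h4 : L * ‖x - y‖ * μs * ∫ u, ‖mulVecE (M - 1) u‖ ∂(stdGaussianE d)
              ≤ L * ‖x - y‖ * μs * frobNorm (M - 1) :=
            mul_le_mul_of_nonneg_left h2 h1
          have h5 : L * ‖x - y‖ * μs * frobNorm (M - 1)
              ≤ L * ‖x - y‖ * μs * Real.sqrt (2 * ((d : ℝ) + s)) :=
            mul_le_mul_of_nonneg_left hfrob h1
          calc _ ≤ L * ‖x - y‖ * μs * frobNorm (M - 1) := h4
            _ ≤ L * ‖x - y‖ * μs * Real.sqrt (2 * ((d : ℝ) + s)) := h5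
            _ = K * ‖x - y‖ := by rw [hK]; ring
  -- gradient of D
  have hDF : HasFDerivAt D ((InnerProductSpace.toDual ℝ _ (gMθ - gθ) :
      EuclideanSpace ℝ (Fin d) →L[ℝ] ℝ)) θ := by
    have h1 := hGμM.hasFDerivAt
    have h2 := hGμ.hasFDerivAt
    have := h1.sub h2
    refine this.congr_fderiv ?_
    have : (InnerProductSpace.toDual ℝ (EuclideanSpace ℝ (Fin d))) (gMθ - gθ)
        = (InnerProductSpace.toDual ℝ _) gMθ - (InnerProductSpace.toDual ℝ _) gθ :=
      map_sub _ _ _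
    exact this.symm
  have hmain : ‖gMθ - gθ‖ ≤ K := by
    have hlipev : ∀ᶠ x in nhds θ, ‖D x - D θ‖ ≤ K * ‖x - θ‖ :=
      Filter.Eventually.of_forall fun x => hDlip x θ
    have := hDF.le_of_lip' hK0 hlipev
    rwa [(InnerProductSpace.toDual ℝ _).norm_map (gMθ - gθ)] at this
  refine ⟨hmain, ?_⟩
  have hcs : |(inner ℝ gθ (gMθ - gθ) : ℝ)| ≤ ‖gθ‖ * ‖gMθ - gθ‖ := abs_real_inner_le_norm _ _
  have hexp : (inner ℝ gθ (gMθ - gθ) : ℝ) = (inner ℝ gθ gMθ : ℝ) - ‖gθ‖ ^ 2 := by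
    rw [inner_sub_right, real_inner_self_eq_norm_sq]
  have hg0 : (0:ℝ) ≤ ‖gθ‖ := norm_nonneg _
  have habs := abs_le.mp hcs
  nlinarith [mul_le_mul_of_nonneg_left hmain hg0]
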